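/- Let n ≥ 1 and 1 ≤ k ≤ n. Then the generating polynomial of the intertwining number over set partitions of {1,…,n} with exactly k blocks equals the q-Stirling number: Σ_{A ∈ Π_{n,k}} q^{i(A)} = S_q(n,k) in ℤ[q]. Equivalently, Σ_{A ∈ Π_{n,k}} q^{n(n−1)/2 − t(A)} = S_q(n,k), where t(A) is the depth index of A. -/

import Mathlib

open Finset
open scoped Classical

noncomputable section

/-- The arcs of a set partition `A` of `{1,…,n}`: pairs `(i,j)` with `i < j`, `i` and `j` in
the same block, and no element of that block strictly between `i` and `j`. -/
noncomputable def arcs (n : ℕ) (A : Finpartition (Finset.Icc 1 n)) : Finset (ℕ × ℕ) :=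
  (Finset.Icc 1 n ×ˢ Finset.Icc 1 n).filter
    (fun p => p.1 < p.2 ∧ ∃ B ∈ A.parts, p.1 ∈ B ∧ p.2 ∈ B ∧
      ∀ k ∈ B, ¬ (p.1 < k ∧ k < p.2))

/-- The depth of a vertex `v`: the number of arcs `(i,j)` with `i < v < j`. -/
noncomputable def vertexDepth (n : ℕ) (A : Finpartition (Finset.Icc 1 n)) (v : ℕ) : ℕ :=
  ((arcs n A).filter (fun p => p.1 < v ∧ v < p.2)).card

/-- The depth of an arc `α = (u,v)`: the number of arcs `(i,j)` with `i < u < v < j`. -/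
noncomputable def arcDepth (n : ℕ) (A : Finpartition (Finset.Icc 1 n)) (α : ℕ × ℕ) : ℕ :=
  ((arcs n A).filter (fun p => p.1 < α.1 ∧ α.2 < p.2)).card

/-- The depth index `t(A) = Σ_{i=1}^m (n−i) − Σ_{v=1}^n depth(v) + Σ_{α} depth(α)`,
where `m` is the number of arcs of `A`. -/
noncomputable def depthIndex (n : ℕ) (A : Finpartition (Finset.Icc 1 n)) : ℤ :=
  (∑ i ∈ Finset.Icc 1 (arcs n A).card, ((n : ℤ) - (i : ℤ)))
    - ∑ v ∈ Finset.Icc 1 n, (vertexDepth n A v : ℤ)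
    + ∑ α ∈ arcs n A, (arcDepth n A α : ℤ)

/-- The intertwining number of `A`: the sum over all unordered pairs of distinct blocks
`{B, C}` of the number of pairs `(b,c) ∈ B × C` with no element of `B ∪ C` strictly between
them.  Since distinct blocks are disjoint, this equals the number of pairs `(x,y)` with
`x < y` lying in different blocks `B ∋ x`, `C ∋ y` such that no element of `B ∪ C` lies
strictly between `x` and `y`. -/
noncomputable def inumber (n : ℕ) (A : Finpartition (Finset.Icc 1 n)) : ℕ :=
  ((Finset.Icc 1 n ×ˢ Finset.Icc 1 n).filter
    (fun p => p.1 < p.2 ∧ ∃ B ∈ A.parts, ∃ C ∈ A.parts, B ≠ C ∧ p.1 ∈ B ∧ p.2 ∈ C ∧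
      ∀ k ∈ B ∪ C, ¬ (p.1 < k ∧ k < p.2))).card

/-- `u` and `v` lie in the same block of `A`. -/
def sameBlock (n : ℕ) (A : Finpartition (Finset.Icc 1 n)) (u v : ℕ) : Prop :=
  ∃ B ∈ A.parts, u ∈ B ∧ v ∈ B

/-- The partner of `v`: `0` if `v` is the minimum of its block, and otherwise the largest
element of the block of `v` smaller than `v`. -/
noncomputable def partner (n : ℕ) (A : Finpartition (Finset.Icc 1 n)) (v : ℕ) : ℕ :=
  ((Finset.Icc 1 n).filter (fun u => u < v ∧ sameBlock n A u v)).sup id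

/-- The partial depth index `t_v(A) = u + #{arcs (i,j) : u < i < j < v}`, where `u` is the
partner of `v`. -/
noncomputable def partialDepthIndex (n : ℕ) (A : Finpartition (Finset.Icc 1 n)) (v : ℕ) : ℕ :=
  partner n A v +
    ((arcs n A).filter (fun p => partner n A v < p.1 ∧ p.2 < v)).card

/-- The partial intertwining number `i_v(A)`: the number of `i` with `u < i < v` (where `u`
is the partner of `v`) such that `i` has no successor in its block, or the successor of `i`
in its block is greater than `v`; i.e. every element of the block of `i` larger than `i`
is larger than `v`. -/
noncomputable def partialInumber (n : ℕ) (A : Finpartition (Finset.Icc 1 n)) (v : ℕ) : ℕ :=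
  ((Finset.Icc 1 n).filter
    (fun i => partner n A v < i ∧ i < v ∧
      ∀ j, sameBlock n A i j → i < j → v < j)).card

/-- The adjacency matrix of `A`: the `n × n` rational matrix whose `(i,j)` entry is `1` if
`(i+1, j+1)` is an arc of `A` (indices shifted from `Fin n` to `{1,…,n}`) and `0` otherwise. -/
noncomputable def adjMatrix (n : ℕ) (A : Finpartition (Finset.Icc 1 n)) :
    Matrix (Fin n) (Fin n) ℚ :=
  fun i j => if ((i : ℕ) + 1, (j : ℕ) + 1) ∈ arcs n A then 1 else 0

/-- The rank-control matrix entry `r_{i,j}` of an `n × n` matrix `M`: the rank of the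
submatrix of `M` consisting of rows `{i, i+1, …, n}` and columns `{1, …, j}`
(in 1-based indexing). -/
noncomputable def rankControl (n : ℕ) (M : Matrix (Fin n) (Fin n) ℚ) (i j : ℕ) : ℕ :=
  (M.submatrix (fun k : {k : Fin n // i ≤ (k : ℕ) + 1} => (k : Fin n))
               (fun l : {l : Fin n // (l : ℕ) + 1 ≤ j} => (l : Fin n))).rank

end
/-- The `q`-Stirling numbers of the second kind `S_q(n,k) ∈ ℤ[q]`, defined by
`S_q(n,k) = q^{k−1} S_q(n−1,k−1) + [k]_q S_q(n−1,k)` for `n, k ≥ 1`, where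
`[k]_q = 1 + q + ⋯ + q^{k−1}`, with `S_q(n,k) = δ_{n,k}` whenever `n = 0` or `k = 0`. -/
noncomputable def qStirling : ℕ → ℕ → Polynomial ℤ
  | 0, 0 => 1
  | 0, _ + 1 => 0
  | _ + 1, 0 => 0
  | n + 1, k + 1 =>
      Polynomial.X ^ k * qStirling n k +
        (∑ i ∈ Finset.range (k + 1), Polynomial.X ^ i) * qStirling n (k + 1)
section Aux
open Finset

noncomputable def bmax (B : Finset ℕ) : ℕ := B.sup id

lemma le_bmax {B : Finset ℕ} {x : ℕ} (hx : x ∈ B) : x ≤ bmax B := Finset.le_sup (f := id) hx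

lemma bmax_mem {B : Finset ℕ} (h : B.Nonempty) : bmax B ∈ B := by
  have hb : bmax B = B.max' h :=
    le_antisymm (Finset.sup_le fun x hx => Finset.le_max' _ _ hx) (le_bmax (B.max'_mem h))
  rw [hb]; exact B.max'_mem h

lemma bmax_le {B : Finset ℕ} {x : ℕ} (h : ∀ y ∈ B, y ≤ x) : bmax B ≤ x :=
  Finset.sup_le h

variable {n : ℕ}

lemma mem_arcs {A : Finpartition (Finset.Icc 1 n)} {p : ℕ × ℕ} :
    p ∈ arcs n A ↔ p.1 < p.2 ∧ ∃ B ∈ A.parts, p.1 ∈ B ∧ p.2 ∈ B ∧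
      ∀ k ∈ B, ¬ (p.1 < k ∧ k < p.2) := by
  unfold arcs
  rw [Finset.mem_filter, Finset.mem_product]
  constructor
  · tauto
  · rintro ⟨h1, B, hB, h2, h3, h4⟩
    exact ⟨⟨A.le hB h2, A.le hB h3⟩, h1, B, hB, h2, h3, h4⟩

lemma arcs_fst_mem {A : Finpartition (Finset.Icc 1 n)} {p : ℕ × ℕ} (hp : p ∈ arcs n A) :
    p.1 ∈ Finset.Icc 1 n := by
  unfold arcs at hp; rw [Finset.mem_filter, Finset.mem_product] at hp; exact hp.1.1

lemma arcs_snd_mem {A : Finpartition (Finset.Icc 1 n)} {p : ℕ × ℕ} (hp : p ∈ arcs n A) :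
    p.2 ∈ Finset.Icc 1 n := by
  unfold arcs at hp; rw [Finset.mem_filter, Finset.mem_product] at hp; exact hp.1.2

lemma arcs_lt {A : Finpartition (Finset.Icc 1 n)} {p : ℕ × ℕ} (hp : p ∈ arcs n A) :
    p.1 < p.2 := (mem_arcs.1 hp).1

lemma arcs_fst_inj {A : Finpartition (Finset.Icc 1 n)} {p q : ℕ × ℕ}
    (hp : p ∈ arcs n A) (hq : q ∈ arcs n A) (h : p.1 = q.1) : p = q := by
  rw [mem_arcs] at hp hq
  obtain ⟨hlt, B, hB, h1, h2, h3⟩ := hp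
  obtain ⟨hlt', C, hC, h1', h2', h3'⟩ := hq
  rw [h] at h1 hlt h3
  have hBC : B = C := A.eq_of_mem_parts hB hC h1 h1'
  subst hBC
  have e1 := h3 q.2 h2'
  have e2 := h3' p.2 h2
  have : p.2 = q.2 := by omega
  exact Prod.ext h this

lemma exists_arc {A : Finpartition (Finset.Icc 1 n)} {B : Finset ℕ} (hB : B ∈ A.parts)
    {v : ℕ} (hv : v ∈ B) (hne : v ≠ bmax B) : ∃ w, (v, w) ∈ arcs n A := by
  have hvlt : v < bmax B := lt_of_le_of_ne (le_bmax hv) hne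
  have hne' : (B.filter (fun x => v < x)).Nonempty :=
    ⟨bmax B, Finset.mem_filter.2 ⟨bmax_mem ⟨v, hv⟩, hvlt⟩⟩
  set w := (B.filter (fun x => v < x)).min' hne' with hw
  have hwmem := Finset.min'_mem _ hne'
  rw [Finset.mem_filter] at hwmem
  refine ⟨w, mem_arcs.2 ⟨hwmem.2, B, hB, hv, hwmem.1, ?_⟩⟩
  rintro k hk ⟨hk1, hk2⟩
  have : w ≤ k := Finset.min'_le _ _ (Finset.mem_filter.2 ⟨hk, hk1⟩)
  omega

lemma bmax_injOn {A : Finpartition (Finset.Icc 1 n)} {B C : Finset ℕ}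
    (hB : B ∈ A.parts) (hC : C ∈ A.parts) (h : bmax B = bmax C) : B = C := by
  have h1 : bmax B ∈ B := bmax_mem (A.nonempty_of_mem_parts hB)
  have h2 : bmax B ∈ C := h ▸ bmax_mem (A.nonempty_of_mem_parts hC)
  exact A.eq_of_mem_parts hB hC h1 h2

lemma count_split (A : Finpartition (Finset.Icc 1 n)) (b0 : ℕ) :
    n - b0 = (A.parts.filter (fun C => b0 < bmax C)).card
      + ((arcs n A).filter (fun p => b0 < p.1)).card := by
  have key : Finset.Icc (b0+1) n =
      (A.parts.filter (fun C => b0 < bmax C)).image bmax ∪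
      ((arcs n A).filter (fun p => b0 < p.1)).image Prod.fst := by
    ext v
    simp only [Finset.mem_union, Finset.mem_image, Finset.mem_filter, Finset.mem_Icc]
    constructor
    · rintro ⟨hv1, hv2⟩
      have hvmem : v ∈ Finset.Icc 1 n := Finset.mem_Icc.2 ⟨by omega, hv2⟩
      obtain ⟨B, hB, hvB⟩ := A.exists_mem hvmem
      by_cases hmax : v = bmax B
      · exact Or.inl ⟨B, ⟨hB, by omega⟩, hmax.symm⟩
      · obtain ⟨w, hw⟩ := exists_arc hB hvB hmax
        exact Or.inr ⟨(v, w), ⟨hw, by omega⟩, rfl⟩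
    · rintro (⟨C, ⟨hC, hlt⟩, rfl⟩ | ⟨p, ⟨hp, hlt⟩, rfl⟩)
      · have h1 : bmax C ∈ Finset.Icc 1 n := A.le hC (bmax_mem (A.nonempty_of_mem_parts hC))
        rw [Finset.mem_Icc] at h1; omega
      · have h1 := arcs_fst_mem hp
        rw [Finset.mem_Icc] at h1; omega
  have hdisj : Disjoint ((A.parts.filter (fun C => b0 < bmax C)).image bmax)
      (((arcs n A).filter (fun p => b0 < p.1)).image Prod.fst) := by
    rw [Finset.disjoint_left]
    rintro v hv1 hv2
    rw [Finset.mem_image] at hv1 hv2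
    obtain ⟨C, hC, rfl⟩ := hv1
    obtain ⟨p, hp, hpv⟩ := hv2
    rw [Finset.mem_filter] at hC hp
    rw [mem_arcs] at *
    obtain ⟨hlt, B, hB, h1, h2, h3⟩ := hp.1
    rw [hpv] at h1 hlt
    have hBC : B = C := A.eq_of_mem_parts hB hC.1 h1 (bmax_mem (A.nonempty_of_mem_parts hC.1))
    subst hBC
    have := le_bmax h2
    omega
  have hinj1 : Set.InjOn bmax ((A.parts.filter (fun C => b0 < bmax C) : Finset (Finset ℕ)) : Set (Finset ℕ)) := by
    intro C1 h1 C2 h2 h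
    rw [Finset.coe_filter, Set.mem_setOf_eq] at h1 h2
    exact bmax_injOn h1.1 h2.1 h
  have hinj2 : Set.InjOn (Prod.fst : ℕ × ℕ → ℕ) (((arcs n A).filter (fun p => b0 < p.1) : Finset (ℕ × ℕ)) : Set (ℕ × ℕ)) := by
    intro p1 h1 p2 h2 h
    rw [Finset.coe_filter, Set.mem_setOf_eq] at h1 h2
    exact arcs_fst_inj h1.1 h2.1 h
  have := congrArg Finset.card key
  rw [Nat.card_Icc, Finset.card_union_of_disjoint hdisj,
    Finset.card_image_of_injOn hinj1, Finset.card_image_of_injOn hinj2] at this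
  omega

lemma card_arcs_add_parts (A : Finpartition (Finset.Icc 1 n)) :
    (arcs n A).card + A.parts.card = n := by
  have h := count_split A 0
  rw [Finset.filter_true_of_mem, Finset.filter_true_of_mem] at h
  · omega
  · intro p hp
    have := arcs_fst_mem hp; rw [Finset.mem_Icc] at this; omega
  · intro C hC
    have h1 : bmax C ∈ Finset.Icc 1 n := A.le hC (bmax_mem (A.nonempty_of_mem_parts hC))
    rw [Finset.mem_Icc] at h1; omega

end Aux

section Constructions
open Finset

variable {n : ℕ}

lemma Icc_succ_eq : Finset.Icc 1 (n+1) = insert (n+1) (Finset.Icc 1 n) := by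
  ext x; simp only [Finset.mem_Icc, Finset.mem_insert]; omega

lemma not_succ_mem_part {A : Finpartition (Finset.Icc 1 n)} {B : Finset ℕ}
    (hB : B ∈ A.parts) : (n+1) ∉ B := by
  intro h
  have := A.le hB h; rw [Finset.mem_Icc] at this; omega

noncomputable def extOne (A : Finpartition (Finset.Icc 1 n)) :
    Finpartition (Finset.Icc 1 (n+1)) :=
  A.extend (b := {n+1}) (by simp)
    (by rw [Finset.disjoint_singleton_right, Finset.mem_Icc]; omega)
    (by rw [Finset.sup_eq_union]; ext x; simp only [Finset.mem_Icc, Finset.mem_union,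
          Finset.mem_singleton]; omega)

lemma parts_extOne (A : Finpartition (Finset.Icc 1 n)) :
    (extOne A).parts = insert {n+1} A.parts := rfl

lemma card_parts_extOne (A : Finpartition (Finset.Icc 1 n)) :
    (extOne A).parts.card = A.parts.card + 1 := by
  rw [parts_extOne, Finset.card_insert_of_notMem]
  intro h
  exact not_succ_mem_part h (Finset.mem_singleton_self _)

noncomputable def extIns (A : Finpartition (Finset.Icc 1 n)) (B : Finset ℕ) :
    Finpartition (Finset.Icc 1 (n+1)) :=
  if hB : B ∈ A.parts then
    { parts := insert (insert (n+1) B) (A.parts.erase B)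
      supIndep := by
        rw [Finset.supIndep_iff_pairwiseDisjoint, Finset.coe_insert]
        apply Set.PairwiseDisjoint.insert
        · exact A.disjoint.subset (Finset.coe_subset.2 (Finset.erase_subset _ _))
        · intro D hD _
          rw [Finset.mem_coe, Finset.mem_erase] at hD
          have : Disjoint (insert (n+1) B) D := by
            rw [Finset.disjoint_insert_left]
            exact ⟨not_succ_mem_part hD.2, A.disjoint hB hD.2 (Ne.symm hD.1)⟩
          exact this
      sup_parts := by
        rw [Finset.sup_insert]
        have h1 : (B : Finset ℕ) ⊔ (A.parts.erase B).sup id = Finset.Icc 1 n := by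
          conv_rhs => rw [← A.sup_parts, ← Finset.insert_erase hB, Finset.sup_insert]
          simp only [id_eq]
        simp only [id_eq]
        rw [Finset.sup_eq_union] at h1 ⊢
        rw [Finset.insert_union, h1, ← Icc_succ_eq]
      bot_notMem := by
        intro h
        rcases Finset.mem_insert.1 h with h | h
        · exact Finset.insert_ne_empty _ _ h.symm
        · exact A.bot_notMem (Finset.mem_of_mem_erase h) }
  else extOne A

lemma parts_extIns {A : Finpartition (Finset.Icc 1 n)} {B : Finset ℕ} (hB : B ∈ A.parts) :
    (extIns A B).parts = insert (insert (n+1) B) (A.parts.erase B) := by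
  rw [extIns, dif_pos hB]

lemma insert_not_mem_erase {A : Finpartition (Finset.Icc 1 n)} {B : Finset ℕ}
    (hB : B ∈ A.parts) : insert (n+1) B ∉ A.parts.erase B := by
  intro h
  exact not_succ_mem_part (Finset.mem_of_mem_erase h) (Finset.mem_insert_self _ _)

lemma card_parts_extIns {A : Finpartition (Finset.Icc 1 n)} {B : Finset ℕ}
    (hB : B ∈ A.parts) : (extIns A B).parts.card = A.parts.card := by
  rw [parts_extIns hB, Finset.card_insert_of_notMem (insert_not_mem_erase hB),
    Finset.card_erase_of_mem hB]
  have : 0 < A.parts.card := Finset.card_pos.2 ⟨B, hB⟩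
  omega

noncomputable def res (A : Finpartition (Finset.Icc 1 (n+1))) :
    Finpartition (Finset.Icc 1 n) :=
  (A.avoid {n+1}).copy (by
    ext x
    simp only [Finset.mem_sdiff, Finset.mem_Icc, Finset.mem_singleton]
    omega)

lemma mem_res {A : Finpartition (Finset.Icc 1 (n+1))} {C : Finset ℕ} :
    C ∈ (res A).parts ↔ ∃ D ∈ A.parts, D ≠ {n+1} ∧ D.erase (n+1) = C := by
  rw [res, Finpartition.copy_parts, Finpartition.mem_avoid]
  constructor
  · rintro ⟨D, hD, hle, rfl⟩
    refine ⟨D, hD, ?_, Finset.erase_eq _ _⟩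
    rintro rfl
    exact hle le_rfl
  · rintro ⟨D, hD, hne, rfl⟩
    refine ⟨D, hD, ?_, (Finset.erase_eq _ _).symm⟩
    intro hle
    rcases Finset.subset_singleton_iff.1 hle with rfl | rfl
    · exact A.bot_notMem hD
    · exact hne rfl

lemma res_extOne (A : Finpartition (Finset.Icc 1 n)) : res (extOne A) = A := by
  refine Finpartition.ext ?_
  ext C
  rw [mem_res, parts_extOne]
  constructor
  · rintro ⟨D, hD, hne, rfl⟩
    rcases Finset.mem_insert.1 hD with rfl | hD'
    · exact absurd rfl hne
    · rwa [Finset.erase_eq_of_notMem (not_succ_mem_part hD')]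
  · intro hC
    refine ⟨C, Finset.mem_insert_of_mem hC, ?_, Finset.erase_eq_of_notMem (not_succ_mem_part hC)⟩
    rintro rfl
    exact not_succ_mem_part hC (Finset.mem_singleton_self _)

lemma insert_ne_singleton {A : Finpartition (Finset.Icc 1 n)} {B : Finset ℕ}
    (hB : B ∈ A.parts) : insert (n+1) B ≠ {n+1} := by
  intro h
  have h2 := Finset.erase_insert (not_succ_mem_part hB)
  rw [h] at h2
  simp only [Finset.erase_singleton] at h2
  apply A.bot_notMem
  rw [Finset.bot_eq_empty, h2]
  exact hB

lemma res_extIns {A : Finpartition (Finset.Icc 1 n)} {B : Finset ℕ} (hB : B ∈ A.parts) :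
    res (extIns A B) = A := by
  refine Finpartition.ext ?_
  ext C
  rw [mem_res, parts_extIns hB]
  constructor
  · rintro ⟨D, hD, hne, rfl⟩
    rcases Finset.mem_insert.1 hD with rfl | hD'
    · rwa [Finset.erase_insert (not_succ_mem_part hB)]
    · have hD'' := Finset.mem_of_mem_erase hD'
      rwa [Finset.erase_eq_of_notMem (not_succ_mem_part hD'')]
  · intro hC
    by_cases hCB : C = B
    · subst hCB
      exact ⟨insert (n+1) C, Finset.mem_insert_self _ _, insert_ne_singleton hC,
        Finset.erase_insert (not_succ_mem_part hC)⟩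
    · refine ⟨C, Finset.mem_insert_of_mem (Finset.mem_erase.2 ⟨hCB, hC⟩), ?_,
        Finset.erase_eq_of_notMem (not_succ_mem_part hC)⟩
      rintro rfl
      exact not_succ_mem_part hC (Finset.mem_singleton_self _)

lemma parts_res_of_singleton {A : Finpartition (Finset.Icc 1 (n+1))}
    (h : {n+1} ∈ A.parts) : (res A).parts = A.parts.erase {n+1} := by
  ext C
  rw [mem_res, Finset.mem_erase]
  constructor
  · rintro ⟨D, hD, hne, rfl⟩
    have hnmem : (n+1) ∉ D := by
      intro hmem
      exact hne (A.eq_of_mem_parts hD h hmem (Finset.mem_singleton_self _))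
    rw [Finset.erase_eq_of_notMem hnmem]
    refine ⟨?_, hD⟩
    rintro rfl
    exact hnmem (Finset.mem_singleton_self _)
  · rintro ⟨hne, hC⟩
    have hnmem : (n+1) ∉ C := by
      intro hmem
      exact hne (A.eq_of_mem_parts hC h hmem (Finset.mem_singleton_self _))
    exact ⟨C, hC, hne, Finset.erase_eq_of_notMem hnmem⟩

lemma extOne_res {A : Finpartition (Finset.Icc 1 (n+1))} (h : {n+1} ∈ A.parts) :
    extOne (res A) = A := by
  refine Finpartition.ext ?_
  rw [parts_extOne, parts_res_of_singleton h, Finset.insert_erase h]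

lemma card_res_of_singleton {A : Finpartition (Finset.Icc 1 (n+1))}
    (h : {n+1} ∈ A.parts) : (res A).parts.card = A.parts.card - 1 := by
  rw [parts_res_of_singleton h, Finset.card_erase_of_mem h]

section Ne
variable {A : Finpartition (Finset.Icc 1 (n+1))} {D0 : Finset ℕ}

lemma parts_res_of_ne (hD0 : D0 ∈ A.parts) (hmem : n+1 ∈ D0) (hne : D0 ≠ {n+1}) :
    (res A).parts = insert (D0.erase (n+1)) (A.parts.erase D0) := by
  ext C
  rw [mem_res, Finset.mem_insert, Finset.mem_erase]
  constructor
  · rintro ⟨D, hD, hDne, rfl⟩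
    by_cases hDD0 : D = D0
    · subst hDD0; exact Or.inl rfl
    · have hnmem : (n+1) ∉ D := by
        intro hm
        exact hDD0 (A.eq_of_mem_parts hD hD0 hm hmem)
      rw [Finset.erase_eq_of_notMem hnmem]
      exact Or.inr ⟨hDD0, hD⟩
  · rintro (rfl | ⟨hCne, hC⟩)
    · exact ⟨D0, hD0, hne, rfl⟩
    · have hnmem : (n+1) ∉ C := by
        intro hm
        exact hCne (A.eq_of_mem_parts hC hD0 hm hmem)
      refine ⟨C, hC, ?_, Finset.erase_eq_of_notMem hnmem⟩
      rintro rfl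
      exact hnmem (Finset.mem_singleton_self _)

lemma erase_succ_nonempty (hD0 : D0 ∈ A.parts) (hmem : n+1 ∈ D0) (hne : D0 ≠ {n+1}) :
    (D0.erase (n+1)).Nonempty := by
  rw [Finset.nonempty_iff_ne_empty]
  intro h
  rw [Finset.erase_eq_empty_iff] at h
  rcases h with h | h
  · apply A.bot_notMem
    rw [Finset.bot_eq_empty, ← h]
    exact hD0
  · exact hne h

lemma erase_mem_res (hD0 : D0 ∈ A.parts) (hmem : n+1 ∈ D0) (hne : D0 ≠ {n+1}) :
    D0.erase (n+1) ∈ (res A).parts := by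
  rw [parts_res_of_ne hD0 hmem hne]
  exact Finset.mem_insert_self _ _

lemma erase_not_mem_erase (hD0 : D0 ∈ A.parts) (hmem : n+1 ∈ D0) (hne : D0 ≠ {n+1}) :
    D0.erase (n+1) ∉ A.parts.erase D0 := by
  intro h
  have h1 := Finset.mem_of_mem_erase h
  have h2 : D0.erase (n+1) ≠ D0 := by
    intro heq
    exact (Finset.notMem_erase (n+1) D0) (by rw [heq]; exact hmem)
  obtain ⟨x, hx⟩ := erase_succ_nonempty hD0 hmem hne
  have hd : Disjoint (D0.erase (n+1)) D0 := A.disjoint h1 hD0 h2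
  rw [Finset.disjoint_left] at hd
  exact hd hx (Finset.mem_of_mem_erase hx)

lemma card_res_of_ne (hD0 : D0 ∈ A.parts) (hmem : n+1 ∈ D0) (hne : D0 ≠ {n+1}) :
    (res A).parts.card = A.parts.card := by
  rw [parts_res_of_ne hD0 hmem hne,
    Finset.card_insert_of_notMem (erase_not_mem_erase hD0 hmem hne),
    Finset.card_erase_of_mem hD0]
  have : 0 < A.parts.card := Finset.card_pos.2 ⟨D0, hD0⟩
  omega

lemma extIns_res (hD0 : D0 ∈ A.parts) (hmem : n+1 ∈ D0) (hne : D0 ≠ {n+1}) :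
    extIns (res A) (D0.erase (n+1)) = A := by
  refine Finpartition.ext ?_
  rw [parts_extIns (erase_mem_res hD0 hmem hne), parts_res_of_ne hD0 hmem hne,
    Finset.insert_erase hmem, Finset.erase_insert (erase_not_mem_erase hD0 hmem hne),
    Finset.insert_erase hD0]

end Ne
end Constructions

section Stats
open Finset

variable {n : ℕ}

noncomputable def ipairs (N : ℕ) (A : Finpartition (Finset.Icc 1 N)) : Finset (ℕ × ℕ) :=
  ((Finset.Icc 1 N ×ˢ Finset.Icc 1 N).filter
    (fun p => p.1 < p.2 ∧ ∃ B ∈ A.parts, ∃ C ∈ A.parts, B ≠ C ∧ p.1 ∈ B ∧ p.2 ∈ C ∧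
      ∀ k ∈ B ∪ C, ¬ (p.1 < k ∧ k < p.2)))

lemma inumber_def (N : ℕ) (A : Finpartition (Finset.Icc 1 N)) :
    inumber N A = (ipairs N A).card := rfl

lemma mem_ipairs {N : ℕ} {A : Finpartition (Finset.Icc 1 N)} {p : ℕ × ℕ} :
    p ∈ ipairs N A ↔ p.1 < p.2 ∧ ∃ B ∈ A.parts, ∃ C ∈ A.parts, B ≠ C ∧ p.1 ∈ B ∧ p.2 ∈ C ∧
      ∀ k ∈ B ∪ C, ¬ (p.1 < k ∧ k < p.2) := by
  unfold ipairs
  rw [Finset.mem_filter, Finset.mem_product]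
  constructor
  · rintro ⟨-, hp⟩
    exact hp
  · rintro ⟨h1, B, hB, C, hC, hne, h2, h3, h4⟩
    exact ⟨⟨A.le hB h2, A.le hC h3⟩, h1, B, hB, C, hC, hne, h2, h3, h4⟩

lemma ipairs_snd_mem {N : ℕ} {A : Finpartition (Finset.Icc 1 N)} {p : ℕ × ℕ}
    (hp : p ∈ ipairs N A) : p.2 ∈ Finset.Icc 1 N := by
  unfold ipairs at hp; rw [Finset.mem_filter, Finset.mem_product] at hp; exact hp.1.2

/-- Membership of a part of `A` (over `[n+1]`), minus `n+1`, in `res A`. -/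
lemma erase_mem_res' {A : Finpartition (Finset.Icc 1 (n+1))} {D : Finset ℕ}
    (hD : D ∈ A.parts) {x : ℕ} (hx : x ∈ D) (hxne : x ≠ n+1) :
    D.erase (n+1) ∈ (res A).parts := by
  rw [mem_res]
  refine ⟨D, hD, ?_, rfl⟩
  rintro rfl
  rw [Finset.mem_singleton] at hx
  exact hxne hx

lemma mem_ipairs_res {A : Finpartition (Finset.Icc 1 (n+1))} {p : ℕ × ℕ} (hp2 : p.2 ≤ n) :
    p ∈ ipairs (n+1) A ↔ p ∈ ipairs n (res A) := by
  rw [mem_ipairs, mem_ipairs]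
  constructor
  · rintro ⟨hlt, B, hB, C, hC, hne, h1, h2, hcond⟩
    have hB' : B.erase (n+1) ∈ (res A).parts := erase_mem_res' hB h1 (by omega)
    have hC' : C.erase (n+1) ∈ (res A).parts := erase_mem_res' hC h2 (by omega)
    refine ⟨hlt, B.erase (n+1), hB', C.erase (n+1), hC', ?_, ?_, ?_, ?_⟩
    · intro heq
      have hx : p.1 ∈ C := Finset.mem_of_mem_erase (heq ▸ Finset.mem_erase.2 ⟨by omega, h1⟩)
      exact hne (A.eq_of_mem_parts hB hC h1 hx)
    · exact Finset.mem_erase.2 ⟨by omega, h1⟩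
    · exact Finset.mem_erase.2 ⟨by omega, h2⟩
    · intro k hk
      rcases Finset.mem_union.1 hk with hk | hk
      · exact hcond k (Finset.mem_union_left _ (Finset.mem_of_mem_erase hk))
      · exact hcond k (Finset.mem_union_right _ (Finset.mem_of_mem_erase hk))
  · rintro ⟨hlt, B', hB', C', hC', hne, h1, h2, hcond⟩
    obtain ⟨B, hB, hBne, rfl⟩ := mem_res.1 hB'
    obtain ⟨C, hC, hCne, rfl⟩ := mem_res.1 hC'
    refine ⟨hlt, B, hB, C, hC, ?_, Finset.mem_of_mem_erase h1, Finset.mem_of_mem_erase h2, ?_⟩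
    · rintro rfl
      exact hne rfl
    · intro k hk
      rcases Finset.mem_union.1 hk with hk | hk
      · by_cases hkn : k = n+1
        · subst hkn; omega
        · exact hcond k (Finset.mem_union_left _ (Finset.mem_erase.2 ⟨hkn, hk⟩))
      · by_cases hkn : k = n+1
        · subst hkn; omega
        · exact hcond k (Finset.mem_union_right _ (Finset.mem_erase.2 ⟨hkn, hk⟩))

lemma mem_arcs_res {A : Finpartition (Finset.Icc 1 (n+1))} {p : ℕ × ℕ} (hp2 : p.2 ≤ n) :
    p ∈ arcs (n+1) A ↔ p ∈ arcs n (res A) := by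
  rw [mem_arcs, mem_arcs]
  constructor
  · rintro ⟨hlt, B, hB, h1, h2, hcond⟩
    have hB' : B.erase (n+1) ∈ (res A).parts := erase_mem_res' hB h1 (by omega)
    refine ⟨hlt, B.erase (n+1), hB', Finset.mem_erase.2 ⟨by omega, h1⟩,
      Finset.mem_erase.2 ⟨by omega, h2⟩, ?_⟩
    intro k hk
    exact hcond k (Finset.mem_of_mem_erase hk)
  · rintro ⟨hlt, B', hB', h1, h2, hcond⟩
    obtain ⟨B, hB, hBne, rfl⟩ := mem_res.1 hB'
    refine ⟨hlt, B, hB, Finset.mem_of_mem_erase h1, Finset.mem_of_mem_erase h2, ?_⟩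
    intro k hk
    by_cases hkn : k = n+1
    · subst hkn; omega
    · exact hcond k (Finset.mem_erase.2 ⟨hkn, hk⟩)

lemma arcs_extOne (A : Finpartition (Finset.Icc 1 n)) : arcs (n+1) (extOne A) = arcs n A := by
  ext p
  by_cases h2 : p.2 ≤ n
  · rw [mem_arcs_res h2, res_extOne]
  · constructor
    · intro hp
      exfalso
      rw [mem_arcs] at hp
      obtain ⟨hlt, B, hB, hp1, hp2, _⟩ := hp
      rw [parts_extOne] at hB
      rcases Finset.mem_insert.1 hB with rfl | hB'
      · rw [Finset.mem_singleton] at hp1 hp2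
        omega
      · have := A.le hB' hp2
        rw [Finset.mem_Icc] at this
        omega
    · intro hp
      exfalso
      have := arcs_snd_mem hp
      rw [Finset.mem_Icc] at this
      omega

lemma succ_not_mem_arcs {A : Finpartition (Finset.Icc 1 n)} {B : Finset ℕ} :
    ((bmax B, n+1) : ℕ × ℕ) ∉ arcs n A := by
  intro h
  have := arcs_snd_mem h
  rw [Finset.mem_Icc] at this
  omega

lemma arcs_extIns {A : Finpartition (Finset.Icc 1 n)} {B : Finset ℕ} (hB : B ∈ A.parts) :
    arcs (n+1) (extIns A B) = insert (bmax B, n+1) (arcs n A) := by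
  have hBne := A.nonempty_of_mem_parts hB
  have hbm : bmax B ∈ B := bmax_mem hBne
  have hble : bmax B ∈ Finset.Icc 1 n := A.le hB hbm
  rw [Finset.mem_Icc] at hble
  ext p
  rw [Finset.mem_insert]
  by_cases h2 : p.2 ≤ n
  · rw [mem_arcs_res h2, res_extIns hB]
    constructor
    · exact Or.inr
    · rintro (rfl | h)
      · exfalso; omega
      · exact h
  · constructor
    · intro hp
      have hsnd := arcs_snd_mem hp
      rw [Finset.mem_Icc] at hsnd
      have hp2 : p.2 = n+1 := by omega
      rw [mem_arcs] at hp
      obtain ⟨hlt, D, hD, hd1, hd2, hcond⟩ := hp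
      rw [parts_extIns hB] at hD
      rcases Finset.mem_insert.1 hD with rfl | hD'
      · have hp1 : p.1 ∈ B := by
          rcases Finset.mem_insert.1 hd1 with h | h
          · omega
          · exact h
        left
        have hble2 : bmax B ≤ p.1 := by
          have := hcond (bmax B) (Finset.mem_insert_of_mem hbm)
          omega
        have hfst : p.1 = bmax B := le_antisymm (le_bmax hp1) hble2
        exact Prod.ext hfst hp2
      · exfalso
        have hD'' := Finset.mem_of_mem_erase hD'
        have := A.le hD'' hd2
        rw [Finset.mem_Icc] at this
        omega
    · rintro (rfl | h)
      · rw [mem_arcs]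
        refine ⟨by simp; omega, insert (n+1) B, ?_, Finset.mem_insert_of_mem hbm,
          Finset.mem_insert_self _ _, ?_⟩
        · rw [parts_extIns hB]; exact Finset.mem_insert_self _ _
        · rintro k hk ⟨hk1, hk2⟩
          rcases Finset.mem_insert.1 hk with rfl | hk'
          · omega
          · have := le_bmax hk'
            simp only at hk1 hk2
            omega
      · exfalso
        have := arcs_snd_mem h
        rw [Finset.mem_Icc] at this
        omega

lemma inumber_split (A : Finpartition (Finset.Icc 1 (n+1))) :
    inumber (n+1) A = inumber n (res A)
      + ((ipairs (n+1) A).filter (fun p => p.2 = n+1)).card := by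
  have hset : (ipairs (n+1) A).filter (fun p => ¬ p.2 = n+1) = ipairs n (res A) := by
    ext p
    rw [Finset.mem_filter]
    constructor
    · rintro ⟨hp, hne⟩
      have := ipairs_snd_mem hp
      rw [Finset.mem_Icc] at this
      rw [← mem_ipairs_res (show p.2 ≤ n by omega)]
      exact hp
    · intro hp
      have hle := ipairs_snd_mem hp
      rw [Finset.mem_Icc] at hle
      rw [← mem_ipairs_res (show p.2 ≤ n by omega)] at hp
      refine ⟨hp, by omega⟩
  rw [inumber_def, inumber_def,
    ← Finset.card_filter_add_card_filter_not (s := ipairs (n+1) A)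
      (p := fun p => p.2 = n+1), hset]
  omega

lemma tail_extOne (A : Finpartition (Finset.Icc 1 n)) :
    (ipairs (n+1) (extOne A)).filter (fun p => p.2 = n+1)
      = A.parts.image (fun C => (bmax C, n+1)) := by
  ext q
  rw [Finset.mem_filter, Finset.mem_image]
  constructor
  · rintro ⟨hq, hq2⟩
    rw [mem_ipairs] at hq
    obtain ⟨hlt, B, hB, C, hC, hne, h1, h2, hcond⟩ := hq
    rw [parts_extOne] at hB hC
    have hCs : C = {n+1} := by
      rcases Finset.mem_insert.1 hC with rfl | hC'
      · rfl
      · exfalso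
        have := A.le hC' h2
        rw [Finset.mem_Icc] at this
        omega
    subst hCs
    have hBp : B ∈ A.parts := by
      rcases Finset.mem_insert.1 hB with rfl | hB'
      · exact absurd rfl hne
      · exact hB'
    have hq1 : q.1 = bmax B := by
      have hub : ∀ k ∈ B, k ≤ q.1 := by
        intro k hk
        have hkn : k ≤ n := by
          have := A.le hBp hk
          rw [Finset.mem_Icc] at this
          omega
        have := hcond k (Finset.mem_union_left _ hk)
        omega
      exact le_antisymm (le_bmax h1) (bmax_le hub)
    exact ⟨B, hBp, by rw [← hq1, ← hq2]⟩
  · rintro ⟨C, hC, rfl⟩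
    have hCne := A.nonempty_of_mem_parts hC
    have hbm : bmax C ∈ C := bmax_mem hCne
    have hble : bmax C ∈ Finset.Icc 1 n := A.le hC hbm
    rw [Finset.mem_Icc] at hble
    refine ⟨mem_ipairs.2 ⟨by simp; omega, C, Finset.mem_insert_of_mem hC, {n+1},
      Finset.mem_insert_self _ _, ?_, hbm, Finset.mem_singleton_self _, ?_⟩, rfl⟩
    · intro h
      exact not_succ_mem_part hC (h ▸ Finset.mem_singleton_self _)
    · rintro k hk ⟨hk1, hk2⟩
      simp only at hk1 hk2
      rcases Finset.mem_union.1 hk with hk | hk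
      · have := le_bmax hk; omega
      · rw [Finset.mem_singleton] at hk; omega

lemma inumber_extOne (A : Finpartition (Finset.Icc 1 n)) :
    inumber (n+1) (extOne A) = inumber n A + A.parts.card := by
  rw [inumber_split, res_extOne, tail_extOne, Finset.card_image_of_injOn]
  intro C1 h1 C2 h2 h
  rw [Finset.mem_coe] at h1 h2
  exact bmax_injOn h1 h2 (by exact congrArg Prod.fst h)

lemma tail_extIns {A : Finpartition (Finset.Icc 1 n)} {B : Finset ℕ} (hB : B ∈ A.parts) :
    (ipairs (n+1) (extIns A B)).filter (fun p => p.2 = n+1)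
      = (A.parts.filter (fun C => bmax B < bmax C)).image (fun C => (bmax C, n+1)) := by
  have hBne := A.nonempty_of_mem_parts hB
  have hbmB : bmax B ∈ B := bmax_mem hBne
  ext q
  rw [Finset.mem_filter, Finset.mem_image]
  constructor
  · rintro ⟨hq, hq2⟩
    rw [mem_ipairs] at hq
    obtain ⟨hlt, D, hD, E, hE, hne, h1, h2, hcond⟩ := hq
    rw [parts_extIns hB] at hD hE
    have hEs : E = insert (n+1) B := by
      rcases Finset.mem_insert.1 hE with rfl | hE'
      · rfl
      · exfalso
        have := A.le (Finset.mem_of_mem_erase hE') h2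
        rw [Finset.mem_Icc] at this
        omega
    subst hEs
    have hDp : D ∈ A.parts.erase B := by
      rcases Finset.mem_insert.1 hD with rfl | hD'
      · exact absurd rfl hne
      · exact hD'
    have hDp2 := Finset.mem_of_mem_erase hDp
    have hub : ∀ k ∈ D ∪ B, k ≤ q.1 := by
      intro k hk
      have hkn : k ≤ n := by
        rcases Finset.mem_union.1 hk with hk | hk
        · have := A.le hDp2 hk
          rw [Finset.mem_Icc] at this; omega
        · have := A.le hB hk
          rw [Finset.mem_Icc] at this; omega
      rcases Finset.mem_union.1 hk with hk | hk
      · have := hcond k (Finset.mem_union_left _ hk)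
        omega
      · have := hcond k (Finset.mem_union_right _ (Finset.mem_insert_of_mem hk))
        omega
    have hq1 : q.1 = bmax D :=
      le_antisymm (le_bmax h1) (bmax_le fun k hk => hub k (Finset.mem_union_left _ hk))
    have hlt2 : bmax B < bmax D := by
      have hle : bmax B ≤ q.1 := hub (bmax B) (Finset.mem_union_right _ hbmB)
      have hne2 : bmax B ≠ bmax D := by
        intro h
        exact (Finset.mem_erase.1 hDp).1 (bmax_injOn hB hDp2 h).symm
      omega
    exact ⟨D, Finset.mem_filter.2 ⟨hDp2, hlt2⟩, by rw [← hq1, ← hq2]⟩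
  · rintro ⟨C, hC, rfl⟩
    rw [Finset.mem_filter] at hC
    obtain ⟨hCp, hCl⟩ := hC
    have hCne := A.nonempty_of_mem_parts hCp
    have hbm : bmax C ∈ C := bmax_mem hCne
    have hble : bmax C ∈ Finset.Icc 1 n := A.le hCp hbm
    rw [Finset.mem_Icc] at hble
    have hCB : C ≠ B := by
      intro h; subst h; omega
    refine ⟨mem_ipairs.2 ⟨by simp; omega, C, ?_, insert (n+1) B, ?_, ?_, hbm,
      Finset.mem_insert_self _ _, ?_⟩, rfl⟩
    · rw [parts_extIns hB]
      exact Finset.mem_insert_of_mem (Finset.mem_erase.2 ⟨hCB, hCp⟩)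
    · rw [parts_extIns hB]
      exact Finset.mem_insert_self _ _
    · intro h
      exact not_succ_mem_part hCp (h ▸ Finset.mem_insert_self _ _)
    · rintro k hk ⟨hk1, hk2⟩
      simp only at hk1 hk2
      rcases Finset.mem_union.1 hk with hk | hk
      · have := le_bmax hk; omega
      · rcases Finset.mem_insert.1 hk with rfl | hk'
        · omega
        · have := le_bmax hk'; omega

lemma inumber_extIns {A : Finpartition (Finset.Icc 1 n)} {B : Finset ℕ} (hB : B ∈ A.parts) :
    inumber (n+1) (extIns A B) = inumber n A
      + (A.parts.filter (fun C => bmax B < bmax C)).card := by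
  rw [inumber_split, res_extIns hB, tail_extIns hB, Finset.card_image_of_injOn]
  intro C1 h1 C2 h2 h
  rw [Finset.mem_coe, Finset.mem_filter] at h1 h2
  exact bmax_injOn h1.1 h2.1 (by exact congrArg Prod.fst h)

end Stats

section Depth
open Finset

variable {n : ℕ}

lemma vertexDepth_extOne (A : Finpartition (Finset.Icc 1 n)) (v : ℕ) :
    vertexDepth (n+1) (extOne A) v = vertexDepth n A v := by
  unfold vertexDepth; rw [arcs_extOne]

lemma arcDepth_extOne (A : Finpartition (Finset.Icc 1 n)) (α : ℕ × ℕ) :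
    arcDepth (n+1) (extOne A) α = arcDepth n A α := by
  unfold arcDepth; rw [arcs_extOne]

lemma vertexDepth_succ_eq_zero (A : Finpartition (Finset.Icc 1 n)) :
    vertexDepth n A (n+1) = 0 := by
  unfold vertexDepth
  rw [Finset.card_eq_zero, Finset.filter_eq_empty_iff]
  intro p hp
  have := arcs_snd_mem hp
  rw [Finset.mem_Icc] at this
  omega

lemma sum_Icc_shift (m N : ℕ) :
    ∑ i ∈ Finset.Icc 1 m, ((↑(N+1) : ℤ) - ↑i)
      = (∑ i ∈ Finset.Icc 1 m, ((N : ℤ) - ↑i)) + m := by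
  have h1 : ∀ i ∈ Finset.Icc 1 m, ((↑(N+1) : ℤ) - ↑i) = ((N : ℤ) - ↑i) + 1 := by
    intro i _
    push_cast
    ring
  rw [Finset.sum_congr rfl h1, Finset.sum_add_distrib, Finset.sum_const, Nat.card_Icc]
  simp

lemma depthIndex_extOne (A : Finpartition (Finset.Icc 1 n)) :
    depthIndex (n+1) (extOne A) = depthIndex n A + (arcs n A).card := by
  unfold depthIndex
  rw [arcs_extOne]
  have h2 : ∑ v ∈ Finset.Icc 1 (n+1), (vertexDepth (n+1) (extOne A) v : ℤ)
      = ∑ v ∈ Finset.Icc 1 n, (vertexDepth n A v : ℤ) := by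
    rw [Finset.sum_congr rfl (fun v _ => by rw [vertexDepth_extOne] :
      ∀ v ∈ Finset.Icc 1 (n+1), (vertexDepth (n+1) (extOne A) v : ℤ) = (vertexDepth n A v : ℤ))]
    rw [Icc_succ_eq, Finset.sum_insert (by rw [Finset.mem_Icc]; omega),
      vertexDepth_succ_eq_zero]
    simp
  have h3 : ∑ α ∈ arcs n A, (arcDepth (n+1) (extOne A) α : ℤ)
      = ∑ α ∈ arcs n A, (arcDepth n A α : ℤ) :=
    Finset.sum_congr rfl (fun α _ => by rw [arcDepth_extOne])
  rw [h2, h3, sum_Icc_shift]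
  ring

lemma depthIndex_extIns {A : Finpartition (Finset.Icc 1 n)} {B : Finset ℕ}
    (hB : B ∈ A.parts) :
    depthIndex (n+1) (extIns A B) = depthIndex n A + bmax B
      + ((arcs n A).filter (fun p => bmax B < p.1)).card := by
  have hbm : bmax B ∈ B := bmax_mem (A.nonempty_of_mem_parts hB)
  have hble : bmax B ∈ Finset.Icc 1 n := A.le hB hbm
  rw [Finset.mem_Icc] at hble
  have hnm : ((bmax B, n+1) : ℕ × ℕ) ∉ arcs n A := succ_not_mem_arcs
  have hcard : (arcs (n+1) (extIns A B)).card = (arcs n A).card + 1 := by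
    rw [arcs_extIns hB, Finset.card_insert_of_notMem hnm]
  have hT1 : ∑ i ∈ Finset.Icc 1 ((arcs n A).card + 1), ((↑(n+1) : ℤ) - ↑i)
      = (∑ i ∈ Finset.Icc 1 (arcs n A).card, ((n : ℤ) - ↑i)) + n := by
    rw [Icc_succ_eq, Finset.sum_insert (by rw [Finset.mem_Icc]; omega), sum_Icc_shift]
    push_cast
    ring
  have hvd : ∀ v, vertexDepth (n+1) (extIns A B) v
      = vertexDepth n A v + (if bmax B < v ∧ v < n+1 then 1 else 0) := by
    intro v
    unfold vertexDepth
    rw [arcs_extIns hB, Finset.filter_insert]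
    dsimp only
    by_cases h : bmax B < v ∧ v < n+1
    · rw [if_pos h, if_pos h,
        Finset.card_insert_of_notMem (fun hh => hnm ((Finset.filter_subset _ _) hh))]
    · rw [if_neg h, if_neg h, Nat.add_zero]
  have hT2 : ∑ v ∈ Finset.Icc 1 (n+1), (vertexDepth (n+1) (extIns A B) v : ℤ)
      = (∑ v ∈ Finset.Icc 1 n, (vertexDepth n A v : ℤ)) + ((n : ℤ) - bmax B) := by
    have hstep : ∀ v ∈ Finset.Icc 1 (n+1), (vertexDepth (n+1) (extIns A B) v : ℤ)
        = (vertexDepth n A v : ℤ) + (if bmax B < v ∧ v < n+1 then (1:ℤ) else 0) := by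
      intro v _
      rw [hvd v]
      split_ifs <;> push_cast <;> ring
    rw [Finset.sum_congr rfl hstep, Finset.sum_add_distrib]
    congr 1
    · rw [Icc_succ_eq, Finset.sum_insert (by rw [Finset.mem_Icc]; omega),
        vertexDepth_succ_eq_zero]
      simp
    · rw [Finset.sum_boole]
      have hIcc : (Finset.Icc 1 (n+1)).filter (fun v => bmax B < v ∧ v < n+1)
          = Finset.Icc (bmax B + 1) n := by
        ext x
        simp only [Finset.mem_Icc, Finset.mem_filter]
        omega
      rw [hIcc, Nat.card_Icc]
      omega
  have haD0 : arcDepth (n+1) (extIns A B) (bmax B, n+1) = 0 := by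
    unfold arcDepth
    rw [Finset.card_eq_zero, Finset.filter_eq_empty_iff]
    intro p hp
    rw [arcs_extIns hB, Finset.mem_insert] at hp
    show ¬(p.1 < bmax B ∧ n+1 < p.2)
    rcases hp with rfl | hp
    · show ¬(bmax B < bmax B ∧ _); omega
    · have := arcs_snd_mem hp
      rw [Finset.mem_Icc] at this
      omega
  have haD : ∀ α ∈ arcs n A, (arcDepth (n+1) (extIns A B) α : ℤ)
      = (arcDepth n A α : ℤ) + (if bmax B < α.1 then (1:ℤ) else 0) := by
    intro α hα
    have hα2 : α.2 ≤ n := by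
      have := arcs_snd_mem hα
      rw [Finset.mem_Icc] at this
      omega
    unfold arcDepth
    rw [arcs_extIns hB, Finset.filter_insert]
    dsimp only
    by_cases h : bmax B < α.1
    · rw [if_pos (⟨h, by omega⟩ : bmax B < α.1 ∧ α.2 < n+1),
        Finset.card_insert_of_notMem (fun hh => hnm ((Finset.filter_subset _ _) hh)),
        if_pos h]
      push_cast
      ring
    · rw [if_neg (fun hc => h hc.1), if_neg h]
      simp
  have hT3 : ∑ α ∈ arcs (n+1) (extIns A B), (arcDepth (n+1) (extIns A B) α : ℤ)
      = (∑ α ∈ arcs n A, (arcDepth n A α : ℤ))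
        + ((arcs n A).filter (fun p => bmax B < p.1)).card := by
    rw [arcs_extIns hB, Finset.sum_insert hnm, haD0, Finset.sum_congr rfl haD,
      Finset.sum_add_distrib, Finset.sum_boole]
    push_cast
    ring
  unfold depthIndex
  rw [hcard, hT1, hT2, hT3]
  push_cast
  ring

end Depth

section Final
open Finset

lemma rank_sum {α : Type*} : ∀ (m : ℕ) (s : Finset α) (f : α → ℕ),
    Set.InjOn f (s : Set α) → s.card = m →
    (∑ x ∈ s, (Polynomial.X : Polynomial ℤ) ^ ((s.filter (fun y => f x < f y)).card))
      = ∑ i ∈ Finset.range m, (Polynomial.X : Polynomial ℤ) ^ i := by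
  intro m
  induction m with
  | zero =>
    intro s f _ hc
    rw [Finset.card_eq_zero] at hc
    subst hc
    simp
  | succ m ih =>
    intro s f hf hc
    have hne : s.Nonempty := Finset.card_pos.1 (by omega)
    obtain ⟨x0, hx0, hmax⟩ := Finset.exists_max_image s f hne
    have hterm0 : s.filter (fun y => f x0 < f y) = ∅ := by
      rw [Finset.filter_eq_empty_iff]
      intro y hy
      exact not_lt.2 (hmax y hy)
    rw [← Finset.add_sum_erase s _ hx0, hterm0, Finset.card_empty, pow_zero]
    have hstep : ∀ y ∈ s.erase x0,
        (Polynomial.X : Polynomial ℤ) ^ ((s.filter (fun z => f y < f z)).card)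
        = (Polynomial.X : Polynomial ℤ) ^ (((s.erase x0).filter (fun z => f y < f z)).card)
            * Polynomial.X := by
      intro y hy
      obtain ⟨hyne, hys⟩ := Finset.mem_erase.1 hy
      have hlt : f y < f x0 := lt_of_le_of_ne (hmax y hys) (fun h => hyne (hf hys hx0 h))
      have hins : s.filter (fun z => f y < f z)
          = insert x0 ((s.erase x0).filter (fun z => f y < f z)) := by
        ext z
        rw [Finset.mem_insert, Finset.mem_filter, Finset.mem_filter, Finset.mem_erase]
        constructor
        · rintro ⟨hz, hlt'⟩
          by_cases hzx : z = x0
          · exact Or.inl hzx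
          · exact Or.inr ⟨⟨hzx, hz⟩, hlt'⟩
        · rintro (rfl | ⟨⟨hzx, hz⟩, hlt'⟩)
          · exact ⟨hx0, hlt⟩
          · exact ⟨hz, hlt'⟩
      rw [hins, Finset.card_insert_of_notMem (by
        intro hmem
        exact (Finset.notMem_erase x0 s) ((Finset.filter_subset _ _) hmem)), pow_succ]
    rw [Finset.sum_congr rfl hstep, ← Finset.sum_mul,
      ih (s.erase x0) f (hf.mono (Finset.coe_subset.2 (Finset.erase_subset _ _)))
        (by simp [Finset.card_erase_of_mem hx0, hc]),
      geom_sum_succ]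
    ring

lemma tri_arith (n : ℕ) : (n+1) * ((n+1) - 1) / 2 = n * (n - 1) / 2 + n := by
  rw [← Nat.choose_two_right, ← Nat.choose_two_right, Nat.choose_succ_succ,
    Nat.choose_one_right]
  have h : Nat.succ 1 = 2 := rfl
  rw [h]
  omega

lemma inumber_add_depthIndex : ∀ (N : ℕ) (A : Finpartition (Finset.Icc 1 N)),
    (inumber N A : ℤ) + depthIndex N A = ((N * (N - 1) / 2 : ℕ) : ℤ) := by
  intro N
  induction N with
  | zero =>
    intro A
    have h0 : (Finset.Icc 1 0) = (∅ : Finset ℕ) := Finset.Icc_eq_empty (by omega)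
    have hi : inumber 0 A = 0 := by
      rw [inumber_def, Finset.card_eq_zero, Finset.eq_empty_iff_forall_notMem]
      intro p hp
      have := ipairs_snd_mem hp
      rw [Finset.mem_Icc] at this
      omega
    have ha : arcs 0 A = ∅ := by
      rw [Finset.eq_empty_iff_forall_notMem]
      intro p hp
      have := arcs_snd_mem hp
      rw [Finset.mem_Icc] at this
      omega
    unfold depthIndex
    rw [hi, ha, Finset.card_empty, h0]
    simp
  | succ n ih =>
    intro A
    have hmem : n+1 ∈ Finset.Icc 1 (n+1) := by rw [Finset.mem_Icc]; omega
    by_cases hs : {n+1} ∈ A.parts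
    · conv_lhs => rw [← extOne_res hs]
      rw [inumber_extOne, depthIndex_extOne]
      have h1 := ih (res A)
      have h2 := card_arcs_add_parts (res A)
      have h2' : ((arcs n (res A)).card : ℤ) + ((res A).parts.card : ℤ) = n := by
        exact_mod_cast h2
      have h3' : (((n+1) * ((n+1) - 1) / 2 : ℕ) : ℤ) = ((n * (n-1) / 2 : ℕ) : ℤ) + n := by
        exact_mod_cast tri_arith n
      simp only [Nat.cast_add]
      linarith [h1, h2', h3']
    · have hD0 : A.part (n+1) ∈ A.parts := A.part_mem.2 hmem
      have hm0 : n+1 ∈ A.part (n+1) := A.mem_part hmem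
      have hne : A.part (n+1) ≠ {n+1} := fun h => hs (h ▸ hD0)
      have hB : (A.part (n+1)).erase (n+1) ∈ (res A).parts := erase_mem_res hD0 hm0 hne
      conv_lhs => rw [← extIns_res hD0 hm0 hne]
      rw [inumber_extIns hB, depthIndex_extIns hB]
      set B := (A.part (n+1)).erase (n+1)
      have h1 := ih (res A)
      have h2 := count_split (res A) (bmax B)
      have hble : bmax B ≤ n := by
        have := (res A).le hB (bmax_mem ((res A).nonempty_of_mem_parts hB))
        rw [Finset.mem_Icc] at this
        omega
      have h4 : (n : ℤ) = (bmax B : ℤ)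
          + (((res A).parts.filter (fun C => bmax B < bmax C)).card : ℤ)
          + (((arcs n (res A)).filter (fun p => bmax B < p.1)).card : ℤ) := by
        have h5 : n = bmax B + ((res A).parts.filter (fun C => bmax B < bmax C)).card
            + ((arcs n (res A)).filter (fun p => bmax B < p.1)).card := by omega
        exact_mod_cast h5
      have h3' : (((n+1) * ((n+1) - 1) / 2 : ℕ) : ℤ) = ((n * (n-1) / 2 : ℕ) : ℤ) + n := by
        exact_mod_cast tri_arith n
      simp only [Nat.cast_add]
      linarith [h1, h4, h3']

lemma sum_pow_inumber : ∀ (N k : ℕ),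
    (∑ A ∈ Finset.univ.filter
        (fun A : Finpartition (Finset.Icc 1 N) => A.parts.card = k),
      (Polynomial.X : Polynomial ℤ) ^ inumber N A) = qStirling N k := by
  intro N
  induction N with
  | zero =>
    intro k
    have hparts : ∀ A : Finpartition (Finset.Icc 1 0), A.parts = ∅ := by
      intro A
      rw [Finset.eq_empty_iff_forall_notMem]
      intro B hB
      obtain ⟨x, hx⟩ := A.nonempty_of_mem_parts hB
      have := A.le hB hx
      rw [Finset.mem_Icc] at this
      omega
    have hinum : ∀ A : Finpartition (Finset.Icc 1 0), inumber 0 A = 0 := by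
      intro A
      rw [inumber_def, Finset.card_eq_zero, Finset.eq_empty_iff_forall_notMem]
      intro p hp
      have := ipairs_snd_mem hp
      rw [Finset.mem_Icc] at this
      omega
    match k with
    | 0 =>
      rw [Finset.filter_true_of_mem (fun A _ => by rw [hparts A, Finset.card_empty])]
      have hA0 : Finpartition (Finset.Icc 1 0) :=
        { parts := ∅
          supIndep := Finset.supIndep_empty _
          sup_parts := by
            rw [Finset.sup_empty, Finset.bot_eq_empty]
            exact (Finset.Icc_eq_empty (by omega)).symm
          bot_notMem := Finset.notMem_empty ⊥ }
      have huniv : (Finset.univ : Finset (Finpartition (Finset.Icc 1 0))) = {hA0} := by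
        ext A
        simp only [Finset.mem_univ, Finset.mem_singleton, true_iff]
        exact Finpartition.ext (by rw [hparts A, hparts hA0])
      rw [huniv, Finset.sum_singleton, hinum hA0, pow_zero]
      rfl
    | k+1 =>
      rw [Finset.filter_false_of_mem, Finset.sum_empty]
      · rfl
      · intro A _
        rw [hparts A, Finset.card_empty]
        omega
  | succ n ih =>
    intro k
    match k with
    | 0 =>
      rw [Finset.filter_false_of_mem, Finset.sum_empty]
      · rfl
      · intro A _
        intro hc
        rw [Finset.card_eq_zero] at hc
        have hsup := A.sup_parts
        rw [hc, Finset.sup_empty] at hsup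
        have h1 : (1 : ℕ) ∈ Finset.Icc 1 (n+1) := by rw [Finset.mem_Icc]; omega
        rw [← hsup] at h1
        simp at h1
    | j+1 =>
      rw [← Finset.sum_filter_add_sum_filter_not
        (Finset.univ.filter (fun A : Finpartition (Finset.Icc 1 (n+1)) => A.parts.card = j+1))
        (fun A => {n+1} ∈ A.parts)]
      have hS1 : (∑ A ∈ (Finset.univ.filter
            (fun A : Finpartition (Finset.Icc 1 (n+1)) => A.parts.card = j+1)).filter
            (fun A => {n+1} ∈ A.parts),
          (Polynomial.X : Polynomial ℤ) ^ inumber (n+1) A)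
          = Polynomial.X ^ j * qStirling n j := by
        have e1 : (∑ A ∈ (Finset.univ.filter
              (fun A : Finpartition (Finset.Icc 1 (n+1)) => A.parts.card = j+1)).filter
              (fun A => {n+1} ∈ A.parts),
            (Polynomial.X : Polynomial ℤ) ^ inumber (n+1) A)
            = ∑ A' ∈ Finset.univ.filter
              (fun A' : Finpartition (Finset.Icc 1 n) => A'.parts.card = j),
              (Polynomial.X : Polynomial ℤ) ^ (inumber n A' + A'.parts.card) := by
          refine Finset.sum_nbij' (fun A => res A) (fun A' => extOne A') ?_ ?_ ?_ ?_ ?_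
          · intro A hA
            rw [Finset.mem_filter, Finset.mem_filter] at hA
            obtain ⟨⟨-, hcard⟩, hsing⟩ := hA
            rw [Finset.mem_filter]
            refine ⟨Finset.mem_univ _, ?_⟩
            rw [card_res_of_singleton hsing, hcard]
            omega
          · intro A' hA'
            rw [Finset.mem_filter] at hA'
            rw [Finset.mem_filter, Finset.mem_filter]
            refine ⟨⟨Finset.mem_univ _, ?_⟩, ?_⟩
            · rw [card_parts_extOne, hA'.2]
            · rw [parts_extOne]
              exact Finset.mem_insert_self _ _
          · intro A hA
            rw [Finset.mem_filter] at hA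
            exact extOne_res hA.2
          · intro A' _
            exact res_extOne A'
          · intro A hA
            rw [Finset.mem_filter] at hA
            conv_lhs => rw [← extOne_res hA.2]
            rw [inumber_extOne]
        rw [e1]
        have e2 : ∀ A' ∈ Finset.univ.filter
            (fun A' : Finpartition (Finset.Icc 1 n) => A'.parts.card = j),
            (Polynomial.X : Polynomial ℤ) ^ (inumber n A' + A'.parts.card)
            = (Polynomial.X : Polynomial ℤ) ^ (inumber n A') * Polynomial.X ^ j := by
          intro A' hA'
          rw [Finset.mem_filter] at hA'
          rw [hA'.2, pow_add]
        rw [Finset.sum_congr rfl e2, ← Finset.sum_mul, ih j]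
        ring
      have hS2 : (∑ A ∈ (Finset.univ.filter
            (fun A : Finpartition (Finset.Icc 1 (n+1)) => A.parts.card = j+1)).filter
            (fun A => ¬ {n+1} ∈ A.parts),
          (Polynomial.X : Polynomial ℤ) ^ inumber (n+1) A)
          = (∑ i ∈ Finset.range (j+1), (Polynomial.X : Polynomial ℤ) ^ i)
              * qStirling n (j+1) := by
        have e1 : (∑ A ∈ (Finset.univ.filter
              (fun A : Finpartition (Finset.Icc 1 (n+1)) => A.parts.card = j+1)).filter
              (fun A => ¬ {n+1} ∈ A.parts),
            (Polynomial.X : Polynomial ℤ) ^ inumber (n+1) A)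
            = ∑ q ∈ (Finset.univ.filter
              (fun A' : Finpartition (Finset.Icc 1 n) => A'.parts.card = j+1)).sigma
                (fun A' => A'.parts),
              (Polynomial.X : Polynomial ℤ) ^ (inumber n q.1
                + ((q.1.parts.filter (fun C => bmax q.2 < bmax C)).card)) := by
          refine Finset.sum_nbij'
            (fun A => ⟨res A, (A.part (n+1)).erase (n+1)⟩)
            (fun q => extIns q.1 q.2) ?_ ?_ ?_ ?_ ?_
          · intro A hA
            rw [Finset.mem_filter, Finset.mem_filter] at hA
            obtain ⟨⟨-, hcard⟩, hns⟩ := hA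
            have hmem : n+1 ∈ Finset.Icc 1 (n+1) := by rw [Finset.mem_Icc]; omega
            have hD0 : A.part (n+1) ∈ A.parts := A.part_mem.2 hmem
            have hm0 : n+1 ∈ A.part (n+1) := A.mem_part hmem
            have hne : A.part (n+1) ≠ {n+1} := fun h => hns (h ▸ hD0)
            rw [Finset.mem_sigma]
            refine ⟨Finset.mem_filter.2 ⟨Finset.mem_univ _, ?_⟩, erase_mem_res hD0 hm0 hne⟩
            rw [card_res_of_ne hD0 hm0 hne, hcard]
          · rintro ⟨A', B⟩ hq
            rw [Finset.mem_sigma] at hq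
            obtain ⟨hA', hB⟩ := hq
            rw [Finset.mem_filter] at hA'
            rw [Finset.mem_filter, Finset.mem_filter]
            refine ⟨⟨Finset.mem_univ _, ?_⟩, ?_⟩
            · rw [card_parts_extIns hB, hA'.2]
            · intro h
              rw [parts_extIns hB, Finset.mem_insert] at h
              rcases h with h | h
              · obtain ⟨x, hx⟩ := A'.nonempty_of_mem_parts hB
                have hx2 : x ∈ ({n+1} : Finset ℕ) := by
                  rw [h]
                  exact Finset.mem_insert_of_mem hx
                rw [Finset.mem_singleton] at hx2
                exact not_succ_mem_part hB (hx2 ▸ hx)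
              · exact not_succ_mem_part (Finset.mem_of_mem_erase h)
                  (Finset.mem_singleton_self _)
          · intro A hA
            rw [Finset.mem_filter] at hA
            have hmem : n+1 ∈ Finset.Icc 1 (n+1) := by rw [Finset.mem_Icc]; omega
            have hD0 : A.part (n+1) ∈ A.parts := A.part_mem.2 hmem
            have hm0 : n+1 ∈ A.part (n+1) := A.mem_part hmem
            have hne : A.part (n+1) ≠ {n+1} := fun h => hA.2 (h ▸ hD0)
            exact extIns_res hD0 hm0 hne
          · rintro ⟨A', B⟩ hq
            rw [Finset.mem_sigma] at hq
            obtain ⟨hA', hB⟩ := hq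
            have h1 : res (extIns A' B) = A' := res_extIns hB
            have h2 : (extIns A' B).part (n+1) = insert (n+1) B := by
              refine (extIns A' B).part_eq_of_mem ?_ (Finset.mem_insert_self _ _)
              rw [parts_extIns hB]
              exact Finset.mem_insert_self _ _
            have h3 : ((extIns A' B).part (n+1)).erase (n+1) = B := by
              rw [h2, Finset.erase_insert (not_succ_mem_part hB)]
            dsimp only
            rw [h1, h3]
          · intro A hA
            rw [Finset.mem_filter] at hA
            have hmem : n+1 ∈ Finset.Icc 1 (n+1) := by rw [Finset.mem_Icc]; omega
            have hD0 : A.part (n+1) ∈ A.parts := A.part_mem.2 hmem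
            have hm0 : n+1 ∈ A.part (n+1) := A.mem_part hmem
            have hne : A.part (n+1) ≠ {n+1} := fun h => hA.2 (h ▸ hD0)
            conv_lhs => rw [← extIns_res hD0 hm0 hne]
            rw [inumber_extIns (erase_mem_res hD0 hm0 hne)]
        rw [e1, Finset.sum_sigma]
        have e2 : ∀ A' ∈ Finset.univ.filter
            (fun A' : Finpartition (Finset.Icc 1 n) => A'.parts.card = j+1),
            (∑ B ∈ A'.parts, (Polynomial.X : Polynomial ℤ) ^ (inumber n A'
              + ((A'.parts.filter (fun C => bmax B < bmax C)).card)))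
            = (Polynomial.X : Polynomial ℤ) ^ (inumber n A')
                * ∑ i ∈ Finset.range (j+1), (Polynomial.X : Polynomial ℤ) ^ i := by
          intro A' hA'
          rw [Finset.mem_filter] at hA'
          have hinj : Set.InjOn bmax (A'.parts : Set (Finset ℕ)) := by
            intro C1 h1 C2 h2 h
            rw [Finset.mem_coe] at h1 h2
            exact bmax_injOn h1 h2 h
          rw [Finset.sum_congr rfl
            (fun B _ => pow_add (Polynomial.X : Polynomial ℤ) (inumber n A') _),
            ← Finset.mul_sum, rank_sum (j+1) A'.parts bmax hinj hA'.2]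
        rw [Finset.sum_congr rfl e2, ← Finset.sum_mul, ih (j+1)]
        ring
      rw [hS1, hS2]
      have hq : qStirling (n+1) (j+1) = Polynomial.X ^ j * qStirling n j
          + (∑ i ∈ Finset.range (j+1), Polynomial.X ^ i) * qStirling n (j+1) := rfl
      rw [hq]

end Final

/-- For `n ≥ 1` and `1 ≤ k ≤ n`, the generating polynomial of the
intertwining number over set partitions of `{1,…,n}` with exactly `k` blocks equals the
`q`-Stirling number `S_q(n,k)`; equivalently,
`Σ_{A ∈ Π_{n,k}} q^{n(n−1)/2 − t(A)} = S_q(n,k)`. -/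
theorem sum_inumber_eq_qStirling (n k : ℕ) (hn : 1 ≤ n) (hk : 1 ≤ k) (hkn : k ≤ n) :
    (∑ A ∈ Finset.univ.filter
        (fun A : Finpartition (Finset.Icc 1 n) => A.parts.card = k),
        (Polynomial.X : Polynomial ℤ) ^ inumber n A) = qStirling n k ∧
    (∑ A ∈ Finset.univ.filter
        (fun A : Finpartition (Finset.Icc 1 n) => A.parts.card = k),
        (Polynomial.X : Polynomial ℤ) ^
          (((n * (n - 1) / 2 : ℕ) : ℤ) - depthIndex n A).toNat) = qStirling n k := by
  refine ⟨sum_pow_inumber n k, ?_⟩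
  rw [← sum_pow_inumber n k]
  apply Finset.sum_congr rfl
  intro A _
  congr 1
  have h := inumber_add_depthIndex n A
  have h2 : ((n * (n - 1) / 2 : ℕ) : ℤ) - depthIndex n A = ((inumber n A : ℕ) : ℤ) := by
    linarith
  rw [h2, Int.toNat_natCast]
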